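/- arXiv:2508.15412 — 2 statements merged into one kernel-verified Lean document; each statement's English description precedes it below -/
import Mathlib

section
/- For any complex Hadamard matrix H of size n, the intersection T^n ∩ H T^n H† equals the center Z(U(n)) of U(n), i.e. a diagonal unitary A satisfies H† A H diagonal if and only if A is scalar. -/
open Matrix

/-- A complex Hadamard matrix: a unitary matrix all of whose entries have modulus `1/√n`. -/
def IsHadamard (n : ℕ) (H : Matrix (Fin n) (Fin n) ℂ) : Prop :=
  H ∈ Matrix.unitaryGroup (Fin n) ℂ ∧ ∀ i j, ‖H i j‖ = 1 / Real.sqrt n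

/-- For any complex Hadamard matrix `H`, the intersection `Tⁿ ∩ H Tⁿ Hᴴ`
is the center of `U(n)`: a diagonal unitary `A` satisfies `Hᴴ A H` diagonal iff `A`
is a scalar unitary. -/
theorem stmt_6 (n : ℕ) (H : Matrix (Fin n) (Fin n) ℂ) (hH : IsHadamard n H)
    (A : Matrix (Fin n) (Fin n) ℂ)
    (hA : A ∈ Matrix.unitaryGroup (Fin n) ℂ) (hAd : A.IsDiag) :
    (Hᴴ * A * H).IsDiag ↔
      ∃ θ : ℝ, A = Complex.exp (θ * Complex.I) • (1 : Matrix (Fin n) (Fin n) ℂ) := by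
  obtain ⟨hHu, hHe⟩ := hH
  rcases Nat.eq_zero_or_pos n with h0 | hn
  · subst h0
    constructor
    · intro _
      exact ⟨0, by ext i j; exact i.elim0⟩
    · intro _ i j _
      exact i.elim0
  have hHs : Hᴴ * H = 1 := by
    simpa [Matrix.star_eq_conjTranspose] using hHu.1
  have hHs' : H * Hᴴ = 1 := by
    simpa [Matrix.star_eq_conjTranspose] using hHu.2
  have hHA : ∀ j i, (Hᴴ * A) j i = (starRingEnd ℂ) (H i j) * A i i := by
    intro j i
    rw [Matrix.mul_apply, Finset.sum_eq_single i]
    · simp [Matrix.conjTranspose_apply]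
    · intro l _ hl
      simp [hAd hl]
    · simp
  have hB : ∀ j k, (Hᴴ * A * H) j k = ∑ i, (starRingEnd ℂ) (H i j) * A i i * H i k := by
    intro j k
    rw [Matrix.mul_apply]
    exact Finset.sum_congr rfl fun i _ => by rw [hHA]
  have hnorm : ∀ i j, (starRingEnd ℂ) (H i j) * H i j = (1 / n : ℂ) := by
    intro i j
    rw [mul_comm, Complex.mul_conj']
    rw [hHe]
    have hsq : (1 / Real.sqrt n) ^ 2 = 1 / n := by
      rw [div_pow, one_pow, Real.sq_sqrt (Nat.cast_nonneg n)]
    rw [← Complex.ofReal_pow, hsq]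
    push_cast
    ring
  have hdiag : ∀ j, (Hᴴ * A * H) j j = (1 / n : ℂ) * ∑ i, A i i := by
    intro j
    rw [hB, Finset.mul_sum]
    refine Finset.sum_congr rfl fun i _ => ?_
    rw [← hnorm i j]; ring
  constructor
  · intro hD
    set c : ℂ := (1 / n : ℂ) * ∑ i, A i i with hc
    have hBc : Hᴴ * A * H = c • (1 : Matrix (Fin n) (Fin n) ℂ) := by
      ext j k
      by_cases h : j = k
      · subst h; simp [Matrix.one_apply, hdiag j, hc]
      · simp [Matrix.one_apply, h, hD h]
    have hAc : A = c • 1 := by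
      calc A = H * (Hᴴ * A * H) * Hᴴ := by
              rw [show H * (Hᴴ * A * H) * Hᴴ = (H * Hᴴ) * A * (H * Hᴴ) by
                simp only [Matrix.mul_assoc], hHs']
              simp
        _ = H * (c • 1) * Hᴴ := by rw [hBc]
        _ = c • (H * Hᴴ) := by
              rw [Matrix.mul_smul, Matrix.mul_one, Matrix.smul_mul]
        _ = c • 1 := by rw [hHs']
    have hcc : (starRingEnd ℂ) c * c = 1 := by
      have h1 := hA.1
      rw [hAc] at h1
      have h2 : (c * (starRingEnd ℂ) c) • (1 : Matrix (Fin n) (Fin n) ℂ) = 1 := by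
        simpa [star_smul, Matrix.smul_mul, Matrix.mul_smul, smul_smul] using h1
      have h3 : ((c * (starRingEnd ℂ) c) • (1 : Matrix (Fin n) (Fin n) ℂ)) ⟨0, hn⟩ ⟨0, hn⟩
          = (1 : Matrix (Fin n) (Fin n) ℂ) ⟨0, hn⟩ ⟨0, hn⟩ := by rw [h2]
      rw [mul_comm]
      simpa [Matrix.one_apply] using h3
    have habs : ‖c‖ = 1 := by
      have h4 := hcc
      rw [mul_comm, Complex.mul_conj'] at h4
      have h5 : ‖c‖ ^ 2 = 1 := by exact_mod_cast h4
      nlinarith [norm_nonneg c]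
    refine ⟨c.arg, ?_⟩
    have hce : Complex.exp (c.arg * Complex.I) = c := by
      conv_rhs => rw [← Complex.norm_mul_exp_arg_mul_I c]
      rw [habs]
      simp
    rw [hAc, hce]
  · rintro ⟨θ, rfl⟩
    have h1 : Hᴴ * (Complex.exp (θ * Complex.I) • 1) * H
        = Complex.exp (θ * Complex.I) • (1 : Matrix (Fin n) (Fin n) ℂ) := by
      rw [Matrix.mul_smul, Matrix.mul_one, Matrix.smul_mul, hHs]
    rw [h1]
    exact Matrix.isDiag_one.smul _
end

section
/- For all y, z ∈ ℝ, the matrix H₄(y,z) = (1/2)·[[1,1,1,1],[1,1,−1,−1],[−e^{iy},e^{iy},e^{iz},−e^{iz}],[e^{iy},−e^{iy},e^{iz},−e^{iz}]] is unitary, and the three bases of ℂ⁴ given by the standard basis, the columns of F₄(0), and the columns of H₄(y,z) are pairwise mutually unbiased: every inner product between vectors from two different bases has squared modulus 1/4. -/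
open Matrix Complex

/-- The complex Hadamard matrix `F₄(0)`. -/
noncomputable def F40 : Matrix (Fin 4) (Fin 4) ℂ :=
  (1 / 2 : ℂ) • !![1, 1, 1, 1; 1, 1, -1, -1; 1, -1, I, -I; 1, -1, -I, I]

/-- The two-parameter family `H₄(y,z)` of 4×4 matrices. -/
noncomputable def H4 (y z : ℝ) : Matrix (Fin 4) (Fin 4) ℂ :=
  (1 / 2 : ℂ) • !![1, 1, 1, 1;
                   1, 1, -1, -1;
                   -Complex.exp (y * I), Complex.exp (y * I),
                     Complex.exp (z * I), -Complex.exp (z * I);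
                   Complex.exp (y * I), -Complex.exp (y * I),
                     Complex.exp (z * I), -Complex.exp (z * I)]

private lemma H4_eq (y z : ℝ) :
    H4 y z = (1 / 2 : ℂ) • !![1, 1, 1, 1; 1, 1, -1, -1;
      -Complex.exp (y * I), Complex.exp (y * I), Complex.exp (z * I), -Complex.exp (z * I);
      Complex.exp (y * I), -Complex.exp (y * I), Complex.exp (z * I), -Complex.exp (z * I)] := rfl

set_option maxHeartbeats 1000000 in
private lemma aux_unitary (e f : ℂ) (he : e ≠ 0) (hf : f ≠ 0)
    (hce : (starRingEnd ℂ) e = e⁻¹) (hcf : (starRingEnd ℂ) f = f⁻¹) :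
    ((1 / 2 : ℂ) • !![1, 1, 1, 1; 1, 1, -1, -1; -e, e, f, -f; e, -e, f, -f])
      ∈ Matrix.unitaryGroup (Fin 4) ℂ := by
  rw [Matrix.mem_unitaryGroup_iff]
  ext i j
  fin_cases i <;> fin_cases j <;>
    simp [Matrix.mul_apply, Fin.sum_univ_four, Matrix.one_apply, hce, hcf, map_ofNat,
      Matrix.vecHead, Matrix.vecTail]
  any_goals norm_num
  any_goals linear_combination (1 / 2 : ℂ) * mul_inv_cancel₀ he + (1 / 2 : ℂ) * mul_inv_cancel₀ hf
  any_goals linear_combination (-(1 / 2) : ℂ) * mul_inv_cancel₀ he + (1 / 2 : ℂ) * mul_inv_cancel₀ hf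

set_option maxHeartbeats 1000000 in
private lemma aux_mub (e f : ℂ) (hae : ‖e‖ = 1) (haf : ‖f‖ = 1)
    (j k : Fin 4) :
    ‖∑ a : Fin 4, star (F40 a j) *
      ((1 / 2 : ℂ) • !![1, 1, 1, 1; 1, 1, -1, -1; -e, e, f, -f; e, -e, f, -f]) a k‖ ^ 2
      = 1 / 4 := by
  fin_cases j <;> fin_cases k <;>
    · simp [F40, Fin.sum_univ_four, Matrix.vecHead, Matrix.vecTail, Complex.star_def,
        Complex.conj_I]
      ring_nf
      simp [_root_.map_mul, hae, haf, Complex.norm_I, map_ofNat]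
      norm_num

set_option maxHeartbeats 1000000 in
/-- For all `y, z ∈ ℝ`, the matrix `H₄(y,z)` is unitary, and the standard
basis, the columns of `F₄(0)` and the columns of `H₄(y,z)` form three pairwise mutually
unbiased bases of ℂ⁴: every inner product between vectors of two distinct bases has
squared modulus `1/4`. -/
theorem stmt_19 (y z : ℝ) :
    H4 y z ∈ Matrix.unitaryGroup (Fin 4) ℂ ∧
    (∀ i j : Fin 4, ‖F40 i j‖ ^ 2 = 1 / 4) ∧
    (∀ i j : Fin 4, ‖H4 y z i j‖ ^ 2 = 1 / 4) ∧
    (∀ j k : Fin 4,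
      ‖∑ a : Fin 4, star (F40 a j) * H4 y z a k‖ ^ 2 = 1 / 4) := by
  have hne : Complex.exp (y * I) ≠ 0 := Complex.exp_ne_zero _
  have hne' : Complex.exp (z * I) ≠ 0 := Complex.exp_ne_zero _
  have hy : (starRingEnd ℂ) (Complex.exp (y * I)) = (Complex.exp (y * I))⁻¹ := by
    rw [← Complex.exp_conj, ← Complex.exp_neg]
    simp [Complex.conj_ofReal]
  have hz : (starRingEnd ℂ) (Complex.exp (z * I)) = (Complex.exp (z * I))⁻¹ := by
    rw [← Complex.exp_conj, ← Complex.exp_neg]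
    simp [Complex.conj_ofReal]
  have hay : ‖Complex.exp (y * I)‖ = 1 := Complex.norm_exp_ofReal_mul_I y
  have haz : ‖Complex.exp (z * I)‖ = 1 := Complex.norm_exp_ofReal_mul_I z
  refine ⟨?_, ?_, ?_, ?_⟩
  · rw [H4_eq]; exact aux_unitary _ _ hne hne' hy hz
  · intro i j
    fin_cases i <;> fin_cases j <;>
      simp [F40, _root_.map_mul, Complex.norm_I, Matrix.vecHead, Matrix.vecTail] <;> norm_num
  · intro i j
    fin_cases i <;> fin_cases j <;>
      simp [H4, _root_.map_mul, hay, haz, Matrix.vecHead, Matrix.vecTail] <;> norm_num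
  · intro j k
    rw [H4_eq]
    exact aux_mub _ _ hay haz j k
end
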